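/- In the Banach lattice C([0, ω₁]) of continuous real-valued functions on the compact ordinal interval [0, ω₁] (ω₁ the first uncountable ordinal), the evaluation functional δ_{ω₁} attains its norm for every equivalent lattice norm on C([0, ω₁]). -/

import Mathlib

/-- A real-valued lattice homomorphism on a Banach lattice. -/
def IsLatticeHomFunctional {X : Type*} [NormedAddCommGroup X] [Lattice X] [IsOrderedAddMonoid X] [HasSolidNorm X] [NormedSpace ℝ X]
    (f : X →L[ℝ] ℝ) : Prop :=
  ∀ x y : X, f (x ⊔ y) = max (f x) (f y)

/-- An atom of a Banach lattice: a positive element generating a one-dimensional ideal. -/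
def IsLatAtom {X : Type*} [NormedAddCommGroup X] [Lattice X] [IsOrderedAddMonoid X] [HasSolidNorm X] [NormedSpace ℝ X] (x₀ : X) : Prop :=
  0 < x₀ ∧ ∀ y : X, 0 ≤ y → y ≤ x₀ → ∃ r : ℝ, y = r • x₀

/-- `l` is the coordinate functional of the atom `x₀`: the band projection onto the span of
`x₀` is `x ↦ l x • x₀`, i.e. `x - l x • x₀` is disjoint from `x₀` for every `x`. -/
def IsCoordinateFunctional {X : Type*} [NormedAddCommGroup X] [Lattice X] [IsOrderedAddMonoid X] [HasSolidNorm X] [NormedSpace ℝ X]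
    (l : X →L[ℝ] ℝ) (x₀ : X) : Prop :=
  ∀ x : X, |x - l x • x₀| ⊓ x₀ = 0

/-- An equivalent lattice norm on `X`. -/
structure LatticeNorm (X : Type*) [NormedAddCommGroup X] [Lattice X] [NormedSpace ℝ X] where
  n : X → ℝ
  add_le : ∀ x y : X, n (x + y) ≤ n x + n y
  smul_eq : ∀ (r : ℝ) (x : X), n (r • x) = |r| * n x
  eq_zero_of : ∀ x : X, n x = 0 → x = 0
  mono : ∀ x y : X, |x| ≤ |y| → n x ≤ n y
  lower : ∃ c : ℝ, 0 < c ∧ ∀ x : X, c * ‖x‖ ≤ n x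
  upper : ∃ C : ℝ, 0 < C ∧ ∀ x : X, n x ≤ C * ‖x‖

/-- The ordinal interval `[0, ω₁]`, where `ω₁` is the first uncountable ordinal, as a
compact Hausdorff space. -/
noncomputable abbrev OrdinalIntervalOmegaOne : Type 1 :=
  Set.Icc (0 : Ordinal.{0}) (Cardinal.aleph 1).ord

namespace St10Aux

noncomputable def topI : OrdinalIntervalOmegaOne :=
  ⟨(Cardinal.aleph 1).ord, ⟨zero_le, le_rfl⟩⟩

noncomputable instance : OrderTop OrdinalIntervalOmegaOne :=
  { top := topI, le_top := fun x => x.2.2 }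

lemma top_eq : (⊤ : OrdinalIntervalOmegaOne) = topI := rfl

lemma omega1_pos : (0 : Ordinal.{0}) < (Cardinal.aleph 1).ord := by
  have := Cardinal.ord_lt_ord.2 Cardinal.aleph0_lt_aleph_one
  rw [Cardinal.ord_aleph0] at this
  exact lt_of_le_of_lt (zero_le) this

instance : Nontrivial OrdinalIntervalOmegaOne :=
  ⟨⟨⟨0, ⟨le_rfl, omega1_pos.le⟩⟩, topI, fun h => omega1_pos.ne (congrArg Subtype.val h)⟩⟩

lemma tail_lemma (h : C(OrdinalIntervalOmegaOne, ℝ)) {ε : ℝ} (hε : 0 < ε) :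
    ∃ a : OrdinalIntervalOmegaOne, a < topI ∧ ∀ t, a < t → |h t - h topI| < ε := by
  have hcont : Filter.Tendsto h (nhds (⊤ : OrdinalIntervalOmegaOne)) (nhds (h ⊤)) :=
    h.continuous.tendsto ⊤
  rw [nhds_top_basis.tendsto_iff Metric.nhds_basis_ball] at hcont
  obtain ⟨a, ha, hball⟩ := hcont ε hε
  rw [top_eq] at ha hball
  refine ⟨a, ha, fun t ht => ?_⟩
  have := hball t ht
  rwa [Metric.mem_ball, Real.dist_eq] at this

lemma clopen_Ioi (β : OrdinalIntervalOmegaOne) (hβ : β < topI) : IsClopen (Set.Ioi β) := by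
  have hle : β.1 + 1 ≤ (Cardinal.aleph 1).ord := by
    have h : β.1 < (Cardinal.aleph 1).ord := hβ
    rwa [Ordinal.add_one_eq_succ, Order.succ_le_iff]
  constructor
  · rw [← isOpen_compl_iff, Set.compl_Ioi]
    have heq : Set.Iic β =
        Set.Iio (⟨β.1 + 1, ⟨zero_le, hle⟩⟩ : OrdinalIntervalOmegaOne) := by
      ext t
      simp only [Set.mem_Iic, Set.mem_Iio, ← Subtype.coe_lt_coe, ← Subtype.coe_le_coe]
      rw [Ordinal.add_one_eq_succ, Order.lt_succ_iff]
    rw [heq]; exact isOpen_Iio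
  · exact isOpen_Ioi

end St10Aux

open St10Aux in
theorem evaluation_at_omegaOne_attains_norm_for_every_lattice_renorming
    (N : LatticeNorm C(OrdinalIntervalOmegaOne, ℝ)) :
    ∃ f : C(OrdinalIntervalOmegaOne, ℝ), N.n f ≤ 1 ∧
      ∀ g : C(OrdinalIntervalOmegaOne, ℝ), N.n g ≤ 1 →
        |g ⟨(Cardinal.aleph 1).ord, ⟨zero_le, le_rfl⟩⟩| ≤
          |f ⟨(Cardinal.aleph 1).ord, ⟨zero_le, le_rfl⟩⟩| := by
  classical
  have hpt : (⟨(Cardinal.aleph 1).ord, ⟨zero_le, le_rfl⟩⟩ :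
      OrdinalIntervalOmegaOne) = topI := rfl
  simp only [hpt]
  set SS : Set ℝ :=
    (fun g : C(OrdinalIntervalOmegaOne, ℝ) => |g topI|) '' {g | N.n g ≤ 1} with hSS
  have hN0 : N.n 0 = 0 := by
    have := N.smul_eq 0 0
    rw [zero_smul] at this
    simpa using this
  have h0mem : (0 : ℝ) ∈ SS := ⟨0, by simp [hN0], by simp⟩
  have hne : SS.Nonempty := ⟨0, h0mem⟩
  obtain ⟨c, hc, hcle⟩ := N.lower
  have hbdd : BddAbove SS := by
    refine ⟨1 / c, fun r hr => ?_⟩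
    obtain ⟨g, hg, rfl⟩ := hr
    have h1 : |g topI| ≤ ‖g‖ := g.norm_coe_le_norm topI
    have h2 : c * ‖g‖ ≤ 1 := le_trans (hcle g) hg
    rw [le_div_iff₀ hc]
    nlinarith [norm_nonneg g]
  set s := sSup SS with hs
  have hs0 : 0 ≤ s := le_csSup hbdd h0mem
  rcases hs0.eq_or_lt with h0 | hspos
  · refine ⟨0, by simp [hN0], fun g hg => ?_⟩
    calc |g topI| ≤ s := le_csSup hbdd (⟨g, hg, rfl⟩ : |g topI| ∈ SS)
      _ = 0 := h0.symm
      _ = |(0 : C(OrdinalIntervalOmegaOne, ℝ)) topI| := by simp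
  · have key : ∀ n : ℕ, ∃ g : C(OrdinalIntervalOmegaOne, ℝ),
        N.n g ≤ 1 ∧ s * ((n + 1) / (n + 2)) < |g topI| := by
      intro n
      have hlt : s * ((n + 1) / (n + 2)) < s := by
        nth_rewrite 2 [← mul_one s]
        apply mul_lt_mul_of_pos_left _ hspos
        rw [div_lt_one (by positivity)]
        norm_num
      obtain ⟨r, hrS, hr⟩ := exists_lt_of_lt_csSup hne hlt
      obtain ⟨g, hg, rfl⟩ := hrS
      exact ⟨g, hg, hr⟩
    choose g hg1 hg2 using key
    have hcpos : ∀ n, 0 < |g n topI| := fun n => lt_of_le_of_lt (by positivity) (hg2 n)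
    set h : ℕ → C(OrdinalIntervalOmegaOne, ℝ) := fun n => (s / |g n topI|) • |g n| with hh
    have hhtop : ∀ n, h n topI = s := by
      intro n
      show ((s / |g n topI|) • |g n|) topI = s
      simp only [ContinuousMap.smul_apply, smul_eq_mul]
      have : |g n| topI = |g n topI| := rfl
      rw [this, div_mul_cancel₀ _ (hcpos n).ne']
    have hhnonneg : ∀ n t, 0 ≤ h n t := by
      intro n t
      show 0 ≤ ((s / |g n topI|) • |g n|) t
      simp only [ContinuousMap.smul_apply, smul_eq_mul]
      have : |g n| t = |g n t| := rfl
      rw [this]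
      positivity
    have hNh : ∀ n, N.n (h n) ≤ s / |g n topI| := by
      intro n
      have habs : N.n |g n| ≤ 1 :=
        le_trans (N.mono |g n| (g n) (by rw [abs_abs])) (hg1 n)
      have hd : (0:ℝ) ≤ s / |g n topI| := by positivity
      have e := N.smul_eq (s / |g n topI|) |g n|
      rw [abs_of_nonneg hd] at e
      calc N.n (h n) = (s / |g n topI|) * N.n |g n| := e
        _ ≤ (s / |g n topI|) * 1 := mul_le_mul_of_nonneg_left habs hd
        _ = s / |g n topI| := mul_one _
    have htails : ∀ n k : ℕ, ∃ a, a < topI ∧ ∀ t, a < t → |h n t - s| < 1 / (k + 1) := by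
      intro n k
      obtain ⟨a, ha, hball⟩ := tail_lemma (h n) (ε := 1 / (k + 1)) (by positivity)
      rw [hhtop n] at hball
      exact ⟨a, ha, hball⟩
    choose a ha1 ha2 using htails
    set F : ℕ × ℕ → Ordinal.{0} := fun p => (a p.1 p.2).1 with hF
    have hβlt : iSup F < (Cardinal.aleph 1).ord := by
      apply Ordinal.iSup_lt_ord
      · rw [Cardinal.isRegular_aleph_one.cof_eq, Cardinal.mk_denumerable]
        exact Cardinal.aleph0_lt_aleph_one
      · exact fun p => ha1 p.1 p.2
    set β : OrdinalIntervalOmegaOne := ⟨iSup F, ⟨zero_le, hβlt.le⟩⟩ with hβdef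
    have hβtop : β < topI := Subtype.mk_lt_mk.2 hβlt
    have hab : ∀ n k, a n k ≤ β := fun n k =>
      Subtype.coe_le_coe.1 (le_ciSup (Ordinal.bddAbove_range F) ((n, k) : ℕ × ℕ))
    have htail : ∀ n, ∀ t, β < t → h n t = s := by
      intro n t ht
      have hk : ∀ k : ℕ, |h n t - s| < 1 / (k + 1) :=
        fun k => ha2 n k t (lt_of_le_of_lt (hab n k) ht)
      by_contra hne'
      have habs : 0 < |h n t - s| := abs_pos.2 (sub_ne_zero.2 hne')
      obtain ⟨k, hk'⟩ := exists_nat_one_div_lt habs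
      exact absurd (hk k) (not_lt.2 hk'.le)
    set f : C(OrdinalIntervalOmegaOne, ℝ) :=
      ⟨(Set.Ioi β).indicator (fun _ => s),
        continuous_indicator (by simp [(clopen_Ioi β hβtop).frontier_eq])
          continuous_const.continuousOn⟩ with hfdef
    have hfapp : ∀ t, f t = if β < t then s else 0 := by
      intro t
      show (Set.Ioi β).indicator (fun _ => s) t = _
      by_cases h' : β < t <;> simp [Set.indicator, Set.mem_Ioi, h']
    have hftop : f topI = s := by rw [hfapp]; simp [hβtop]
    have hf0 : (0 : C(OrdinalIntervalOmegaOne, ℝ)) ≤ f := by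
      rw [ContinuousMap.le_def]
      intro t
      rw [ContinuousMap.zero_apply, hfapp]
      split_ifs
      · exact hs0
      · exact le_rfl
    have hfh : ∀ n, f ≤ h n := by
      intro n
      rw [ContinuousMap.le_def]
      intro t
      rw [hfapp]
      split_ifs with h'
      · exact (htail n t h').ge
      · exact hhnonneg n t
    have hNf : N.n f ≤ 1 := by
      have bound : ∀ n : ℕ, N.n f ≤ s / |g n topI| := by
        intro n
        refine le_trans (N.mono f (h n) ?_) (hNh n)
        have e1 : |f| = f := abs_of_nonneg hf0
        have e2 : |h n| = h n := abs_of_nonneg (ContinuousMap.le_def.2 fun t => by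
          rw [ContinuousMap.zero_apply]; exact hhnonneg n t)
        rw [e1, e2]
        exact hfh n
      refine le_of_forall_pos_le_add fun ε hε => ?_
      obtain ⟨n, hn⟩ := exists_nat_one_div_lt hε
      have hg2' : s * (n + 1) < |g n topI| * (n + 2) := by
        have := hg2 n
        rw [← mul_div_assoc] at this
        exact (div_lt_iff₀ (by positivity)).1 this
      have h1 : s / |g n topI| < (n + 2) / (n + 1) := by
        rw [div_lt_div_iff₀ (hcpos n) (by positivity)]
        linarith
      have h2 : ((n : ℝ) + 2) / (n + 1) = 1 + 1 / (n + 1) := by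
        field_simp
        ring
      linarith [bound n]
    refine ⟨f, hNf, fun g' hg' => ?_⟩
    rw [hftop, abs_of_nonneg hs0]
    exact le_csSup hbdd (⟨g', hg', rfl⟩ : |g' topI| ∈ SS)
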